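/- If G is acyclic, then the set of vertices (extreme points) of the polytope F_G is exactly { x_R : R a route of G }. -/

import Mathlib

namespace FP

/-- The three possible types of an edge `(i,j)` with `i < j`. -/
inductive EdgeType : Type
  | forward
  | backward
  | bidirectional
  deriving DecidableEq

/-- An edge is a pair of endpoints `(i,j)` (with the convention `i < j`
for well-formed graphs) together with its type. -/
abbrev GEdge : Type := ℕ × ℕ × EdgeType

/-- A directed multigraph given by a list of edges, together with a
distinguished source and sink vertex. -/
structure LGraph : Type where
  edges : List GEdge
  src : ℕ
  snk : ℕ

namespace LGraph

/-- The number of edges. -/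
def m (G : LGraph) : ℕ := G.edges.length

/-- The smaller endpoint of the `e`-th edge. -/
def tail (G : LGraph) (e : Fin G.m) : ℕ := (G.edges.get e).1

/-- The larger endpoint of the `e`-th edge. -/
def head (G : LGraph) (e : Fin G.m) : ℕ := (G.edges.get e).2.1

/-- The type of the `e`-th edge. -/
def etype (G : LGraph) (e : Fin G.m) : EdgeType := (G.edges.get e).2.2

/-- Wellformedness: the graph has vertex set `{1,…,n}` and each edge `(i,j)`
satisfies `i < j`. -/
def WF (G : LGraph) (n : ℕ) : Prop := ∀ e ∈ G.edges, 1 ≤ e.1 ∧ e.1 < e.2.1 ∧ e.2.1 ≤ n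

/-- The netflow of `x` at the vertex `v`: total flow on edges `(v,k)`, `v < k`,
minus the total flow on edges `(i,v)`, `i < v`. -/
noncomputable def netflow (G : LGraph) (x : Fin G.m → ℝ) (v : ℕ) : ℝ :=
  ∑ e : Fin G.m, ((if G.tail e = v then x e else 0) - (if G.head e = v then x e else 0))

/-- The set of `u`-flows on `G`, where `u = e_src - e_snk`: the netflow is `1` at the
source, `-1` at the sink and `0` elsewhere, flows on forward edges are nonnegative and
flows on backward edges are nonpositive (bidirectional edges unrestricted).  This is
the flow polytope `F_G ⊆ ℝ^m`. -/
def flowSet (G : LGraph) : Set (Fin G.m → ℝ) :=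
  { x | (∀ v : ℕ, G.netflow x v = (if v = G.src then (1 : ℝ) else 0) - (if v = G.snk then 1 else 0))
      ∧ ∀ e : Fin G.m, (G.etype e = .forward → 0 ≤ x e) ∧ (G.etype e = .backward → x e ≤ 0) }

/-- One step of a directed walk: forward edges can be traversed from the smaller to the
larger endpoint, backward edges from the larger to the smaller, bidirectional edges both
ways. -/
def DStep (G : LGraph) (a b : ℕ) : Prop :=
  ∃ e : Fin G.m, (G.tail e = a ∧ G.head e = b ∧ G.etype e ≠ .backward) ∨
                 (G.head e = a ∧ G.tail e = b ∧ G.etype e ≠ .forward)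

/-- `G` is acyclic if it has no directed cycle. -/
def Acyclic (G : LGraph) : Prop := ∀ v : ℕ, ¬ Relation.TransGen G.DStep v v

/-- One step in the underlying undirected graph. -/
def UStep (G : LGraph) (a b : ℕ) : Prop :=
  ∃ e : Fin G.m, (G.tail e = a ∧ G.head e = b) ∨ (G.head e = a ∧ G.tail e = b)

/-- `G` is connected (as an undirected graph on the vertex set `{1,…,n}`). -/
def Connected (G : LGraph) (n : ℕ) : Prop :=
  ∀ a b : ℕ, 1 ≤ a → a ≤ n → 1 ≤ b → b ≤ n → Relation.ReflTransGen G.UStep a b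

/-- The starting vertex of a traversal step `(e, d)`: `d = true` means the edge `e` is
traversed from its smaller to its larger endpoint. -/
def sv (G : LGraph) (s : Fin G.m × Bool) : ℕ := if s.2 then G.tail s.1 else G.head s.1

/-- The ending vertex of a traversal step. -/
def ev (G : LGraph) (s : Fin G.m × Bool) : ℕ := if s.2 then G.head s.1 else G.tail s.1

/-- A route of `G`: a directed path from the source to the sink (not repeating edges),
traversing each edge in a direction allowed by its type. -/
structure Route (G : LGraph) : Type where
  steps : List (Fin G.m × Bool)
  ne : steps ≠ []
  chain : steps.Chain' (fun s t => G.ev s = G.sv t)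
  first : G.sv (steps.head ne) = G.src
  last : G.ev (steps.getLast ne) = G.snk
  dir : ∀ s ∈ steps, (s.2 = true → G.etype s.1 ≠ .backward) ∧ (s.2 = false → G.etype s.1 ≠ .forward)
  nodup : (steps.map Prod.fst).Nodup

/-- The signed characteristic vector of a route: `+1` on edges traversed from smaller to
larger endpoint, `-1` on edges traversed from larger to smaller endpoint, `0` on unused
edges. -/
noncomputable def Route.vec {G : LGraph} (R : Route G) : Fin G.m → ℝ := fun e =>
  if (e, true) ∈ R.steps then 1 else if (e, false) ∈ R.steps then -1 else 0

end LGraph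

/-- A point of `ℝ^α` is a lattice point if all its coordinates are integers. -/
def IsLatticePt {α : Type*} (x : α → ℝ) : Prop := ∀ i, ∃ z : ℤ, x i = (z : ℝ)

/-- Integral equivalence of two subsets `P ⊆ ℝ^α`, `Q ⊆ ℝ^β`: an affine map `φ` restricting
to a bijection from `P` onto `Q` and to a bijection between the lattice points of the
affine hull of `P` and those of the affine hull of `Q`. -/
def IntEquiv {α β : Type*} (P : Set (α → ℝ)) (Q : Set (β → ℝ)) : Prop :=
  ∃ φ : (α → ℝ) →ᵃ[ℝ] (β → ℝ),
    Set.BijOn φ P Q ∧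
    Set.BijOn φ ({x | IsLatticePt x} ∩ (affineSpan ℝ P : Set (α → ℝ)))
                ({x | IsLatticePt x} ∩ (affineSpan ℝ Q : Set (β → ℝ)))

/-! ### Lattice paths and the canonical indexing -/

/-- A lattice path is a list of letters, `true` = E-step `(1,0)`, `false` = N-step `(0,1)`.
`ovl ν` is the path `ν̄ = E ν N`. -/
def ovl (ν : List Bool) : List Bool := true :: ν ++ [false]

/-- Auxiliary function for the canonical indexing: `prev` is the previous letter,
`k` is the last index used. -/
def canonIdxAux : List Bool → Bool → ℕ → List ℕ
  | [], _, _ => []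
  | c :: rest, prev, k =>
    if prev && !c then k :: canonIdxAux rest c k
    else (k + 1) :: canonIdxAux rest c (k + 1)

/-- The canonical indexing of a word in `{E,N}`: reading left to right, each letter
receives the next positive integer, except that the first `N` of a maximal run of `N`s
receives the index of the immediately preceding `E` step. -/
def canonIdx (w : List Bool) : List ℕ := canonIdxAux w false 0

/-- The letter at position `p` (`true` = E). -/
def letterAt (w : List Bool) (p : ℕ) : Bool := w.getD p false

/-- The canonical index of the letter at position `p`. -/
def idxAt (w : List Bool) (p : ℕ) : ℕ := (canonIdx w).getD p 0

/-- The largest canonical index `n` of the word `w`. -/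
def nIdx (w : List Bool) : ℕ := idxAt w (w.length - 1)

/-- The set `I` of indices of E steps. -/
def Iset (w : List Bool) : Finset ℕ :=
  (((List.range w.length).filter (fun p => letterAt w p)).map (idxAt w)).toFinset

/-- The set `J` of indices of N steps. -/
def Jset (w : List Bool) : Finset ℕ :=
  (((List.range w.length).filter (fun p => !letterAt w p)).map (idxAt w)).toFinset

/-- The set `I ∩ J` of indices of valleys. -/
def Vset (w : List Bool) : Finset ℕ := Iset w ∩ Jset w

/-- The valleys `v_1 < v_2 < ⋯ < v_w` as a sorted list. -/
def valleyList (w : List Bool) : List ℕ := (Vset w).sort (· ≤ ·)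

/-- The number `w` of valleys. -/
def numVal (w : List Bool) : ℕ := (valleyList w).length

/-- The `k`-th valley `v_k` (`1 ≤ k ≤ numVal w`). -/
def vv (w : List Bool) (k : ℕ) : ℕ := (valleyList w).getD (k - 1) 0

/-! ### The ν-graph, its bidirectional version and partial augmentations -/

/-- `(i,j)` is an edge of the ν-graph iff `E_i ⋯ N_j` is a consecutive subword of `w`
whose only valleys are `E_k N_k` with `k = i` or `k = j`. -/
def isNuEdgeB (w : List Bool) (i j : ℕ) : Bool :=
  (List.range w.length).any fun p =>
    (List.range w.length).any fun q =>
      decide (p < q) && letterAt w p && !letterAt w q &&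
      decide (idxAt w p = i) && decide (idxAt w q = j) &&
      ((List.range w.length).all fun r =>
        !(decide (p ≤ r) && decide (r + 1 ≤ q) && letterAt w r && !letterAt w (r + 1)) ||
        decide (idxAt w r = i) || decide (idxAt w r = j))

/-- The list of edges `(i,j)`, `i < j`, of the ν-graph `G(ν)` (where `w = ν̄`). -/
def nuEdgePairs (w : List Bool) : List (ℕ × ℕ) :=
  ((List.range (nIdx w + 1)).flatMap fun i =>
    (List.range (nIdx w + 1)).map fun j => (i, j)).filter
    fun p => decide (p.1 < p.2) && isNuEdgeB w p.1 p.2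

/-- The edges of `G(ν)`, all forward. -/
def Gedges (w : List Bool) : List GEdge :=
  (nuEdgePairs w).map fun p => (p.1, p.2, EdgeType.forward)

/-- The edges of the bidirectional ν-graph `G_B(ν)`: an edge is bidirectional exactly
when both of its endpoints lie in `I ∩ J`. -/
def GBedges (w : List Bool) : List GEdge :=
  (nuEdgePairs w).map fun p =>
    (p.1, p.2, if p.1 ∈ Vset w ∧ p.2 ∈ Vset w then EdgeType.bidirectional else EdgeType.forward)

/-- Out-degree of a vertex in an edge list: the number of edges traversable out of `v`. -/
def outDegL (E : List GEdge) (v : ℕ) : ℕ :=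
  (E.filter fun e => (decide (e.1 = v) && decide (e.2.2 ≠ EdgeType.backward)) ||
                     (decide (e.2.1 = v) && decide (e.2.2 ≠ EdgeType.forward))).length

/-- In-degree of a vertex in an edge list: the number of edges traversable into `v`. -/
def inDegL (E : List GEdge) (v : ℕ) : ℕ :=
  (E.filter fun e => (decide (e.2.1 = v) && decide (e.2.2 ≠ EdgeType.backward)) ||
                     (decide (e.1 = v) && decide (e.2.2 ≠ EdgeType.forward))).length

/-- The full augmentation of an edge list on inner vertices `1,…,n`: add a source `s = 0`
and a sink `t = n+1` together with forward edges `(s,i)` and `(i,t)` for all `i`. -/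
def fullAug (n : ℕ) (E : List GEdge) : List GEdge :=
  E ++ ((List.range n).map fun i => (0, i + 1, EdgeType.forward))
    ++ ((List.range n).map fun i => (i + 1, n + 1, EdgeType.forward))

/-- The partial augmentation: the full augmentation with the edges `(s,i)` for which `i`
has out-degree one, and the edges `(j,t)` for which `j` has in-degree one, removed. -/
def partAug (n : ℕ) (E : List GEdge) : List GEdge :=
  E ++ ((List.range n).filterMap fun i =>
          if outDegL (fullAug n E) (i + 1) = 1 then none else some (0, i + 1, EdgeType.forward))
    ++ ((List.range n).filterMap fun j =>
          if inDegL (fullAug n E) (j + 1) = 1 then none else some (j + 1, n + 1, EdgeType.forward))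

/-- The graph `G̃_B(ν)`: the partial augmentation of the bidirectional ν-graph, with
source `s = 0` and sink `t = n+1`. -/
def GBt (w : List Bool) : LGraph := ⟨partAug (nIdx w) (GBedges w), 0, nIdx w + 1⟩

/-- The graph `G̃(ν)`: the partial augmentation of the ν-graph. -/
def Gt (w : List Bool) : LGraph := ⟨partAug (nIdx w) (Gedges w), 0, nIdx w + 1⟩

/-- The edges of the graph `G(ν,k)`: the bidirectional path of `G_B(ν)` is replaced by
`C_ν(k)`, i.e. all edges are made forward, the forward edge `(v_k, v_{k+1})` is removed
and the backward edge `(v_1, v_w)` is added when `k < w` (for `k = w` nothing changes). -/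
def GnuIedges (w : List Bool) (k : ℕ) : List GEdge :=
  ((nuEdgePairs w).filterMap fun p =>
    if k < numVal w ∧ p = (vv w k, vv w (k + 1)) then none
    else some (p.1, p.2, EdgeType.forward))
  ++ (if k < numVal w then [(vv w 1, vv w (numVal w), EdgeType.backward)] else [])

/-- The graph `G̃(ν,k)`: the partial augmentation of `G(ν,k)`. -/
def Gnut (w : List Bool) (k : ℕ) : LGraph := ⟨partAug (nIdx w) (GnuIedges w k), 0, nIdx w + 1⟩

/-- All candidate edges on the vertex set `{0,1,…,n+1}`. -/
def allCand (n : ℕ) : List GEdge :=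
  (List.range (n + 2)).flatMap fun a =>
    (List.range (n + 2)).flatMap fun b =>
      [(a, b, EdgeType.forward), (a, b, EdgeType.backward), (a, b, EdgeType.bidirectional)]

/-- The intersection `∩_{k ∈ S} G̃(ν,k)` of the partial augmentations of the graphs
`G(ν,k)`, `k ∈ S`, as a graph with source `0` and sink `n+1`. -/
def interGraph (w : List Bool) (S : Finset ℕ) : LGraph :=
  ⟨(allCand (nIdx w)).filter fun e =>
      decide (∀ k ∈ S, e ∈ partAug (nIdx w) (GnuIedges w k)), 0, nIdx w + 1⟩

/-! ### The polytopes `Q_i` -/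

/-- The condition on a route of `G̃_B(ν)` defining `Q_k` (`1 ≤ k < w`): the route does not
traverse the bidirectional edge `(v_k, v_{k+1})` forward, and traverses it backward
whenever it traverses any bidirectional edge backward. -/
def QRoute (w : List Bool) (k : ℕ) (R : LGraph.Route (GBt w)) : Prop :=
  (∀ e : Fin (GBt w).m, (GBt w).tail e = vv w k → (GBt w).head e = vv w (k + 1) →
      (e, true) ∉ R.steps) ∧
  ((∃ s ∈ R.steps, s.2 = false) →
      ∃ e : Fin (GBt w).m, (GBt w).tail e = vv w k ∧ (GBt w).head e = vv w (k + 1) ∧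
        (e, false) ∈ R.steps)

/-- The polytope `Q_k` for `1 ≤ k ≤ w`.  For `k < w` it is the convex hull of the signed
characteristic vectors of the routes satisfying `QRoute`, and `Q_w` is the flow polytope
`F_{G̃(ν)}` viewed inside `F_{G̃_B(ν)}` (the nonnegative flows). -/
def Qset (w : List Bool) (k : ℕ) : Set (Fin (GBt w).m → ℝ) :=
  if k = numVal w then { x ∈ (GBt w).flowSet | ∀ e, 0 ≤ x e }
  else convexHull ℝ { x | ∃ R : LGraph.Route (GBt w), QRoute w k R ∧ x = R.vec }

/-! ### Products of simplices -/

/-- The `i`-th standard basis vector. -/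
def stdBasisVec {α : Type*} [DecidableEq α] (i : α) : α → ℝ := fun k => if k = i then 1 else 0

/-- The product of simplices `Δ_a × Δ_b = conv{(e_i, e_j)} ⊆ ℝ^{a+1} × ℝ^{b+1}`. -/
def prodSimplices (a b : ℕ) : Set ((Fin (a + 1) ⊕ Fin (b + 1)) → ℝ) :=
  convexHull ℝ { x | ∃ (i : Fin (a + 1)) (j : Fin (b + 1)),
    x = Sum.elim (stdBasisVec i) (stdBasisVec j) }

/-! ### Arcs and (I,J)-trees -/

/-- An arc on `w`: a pair `(i,j)` with `i ∈ I` and `j ∈ J`. -/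
def IsArc (w : List Bool) (p : ℕ × ℕ) : Prop := p.1 ∈ Iset w ∧ p.2 ∈ Jset w

/-- The six configurations in which the arcs `(i,j) = p` and `(i',j') = q` cyclically
cross. -/
def CycCrossRaw (p q : ℕ × ℕ) : Prop :=
  (p.1 < q.1 ∧ q.1 < p.2 ∧ p.2 < q.2) ∨   -- i < i' < j < j'
  (q.2 < p.1 ∧ p.1 < q.1 ∧ q.1 < p.2) ∨   -- j' < i < i' < j
  (p.2 < q.2 ∧ q.2 < p.1 ∧ p.1 < q.1) ∨   -- j < j' < i < i'
  (q.1 < p.2 ∧ p.2 < q.2 ∧ q.2 < p.1) ∨   -- i' < j < j' < i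
  (p.1 < q.2 ∧ q.2 < q.1 ∧ q.1 < p.2) ∨   -- i < j' < i' < j
  (p.2 < p.1 ∧ p.1 < q.2 ∧ q.2 < q.1)     -- j < i < j' < i'

/-- Two arcs cyclically cross (up to swapping the roles of the two arcs). -/
def CycCross (p q : ℕ × ℕ) : Prop := CycCrossRaw p q ∨ CycCrossRaw q p

/-- A cyclic (I,J)-forest: a set of pairwise cyclically non-crossing arcs. -/
def CycForest (w : List Bool) (F : Set (ℕ × ℕ)) : Prop :=
  (∀ p ∈ F, IsArc w p) ∧ ∀ p ∈ F, ∀ q ∈ F, p ≠ q → ¬ CycCross p q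

/-- A cyclic (I,J)-tree: a maximal cyclic (I,J)-forest. -/
def CycTree (w : List Bool) (T : Set (ℕ × ℕ)) : Prop :=
  CycForest w T ∧ ∀ T', CycForest w T' → T ⊆ T' → T' = T

/-- An increasing (I,J)-forest: a cyclic (I,J)-forest all of whose arcs are increasing
or minimal. -/
def IncForest (w : List Bool) (F : Set (ℕ × ℕ)) : Prop :=
  CycForest w F ∧ ∀ p ∈ F, p.1 ≤ p.2

/-- An increasing (I,J)-tree: a maximal increasing (I,J)-forest. -/
def IncTree (w : List Bool) (T : Set (ℕ × ℕ)) : Prop :=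
  IncForest w T ∧ ∀ T', IncForest w T' → T ⊆ T' → T' = T

/-- Two edges `(a,b)` and `(c,d)` with `a < b`, `c < d` cross if `a < c < b < d` or
`c < a < d < b`. -/
def CrossE (p q : ℕ × ℕ) : Prop :=
  (p.1 < q.1 ∧ q.1 < p.2 ∧ p.2 < q.2) ∨ (q.1 < p.1 ∧ p.1 < q.2 ∧ q.2 < p.2)

/-- A graph on `I ∪ J` whose edges `(i,j)` satisfy `i ∈ I`, `j ∈ J`, `i < j`, which is
alternating (every vertex is a source or a sink) and non-crossing. -/
def AltNC (w : List Bool) (H : Set (ℕ × ℕ)) : Prop :=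
  (∀ p ∈ H, p.1 ∈ Iset w ∧ p.2 ∈ Jset w ∧ p.1 < p.2) ∧
  (∀ v : ℕ, (∀ p ∈ H, p.2 ≠ v) ∨ (∀ p ∈ H, p.1 ≠ v)) ∧
  (∀ p ∈ H, ∀ q ∈ H, p ≠ q → ¬ CrossE p q)

/-- The set `D_ν̄`: maximal alternating non-crossing graphs. -/
def Dnu (w : List Bool) (H : Set (ℕ × ℕ)) : Prop :=
  AltNC w H ∧ ∀ H', AltNC w H' → H ⊆ H' → H' = H

/-- A maximal arc: `(1,n)`, or an arc `(i,j)` with `j < i` and no index strictly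
between `j` and `i`. -/
def MaxArc (w : List Bool) (p : ℕ × ℕ) : Prop :=
  (p.1 = 1 ∧ p.2 = nIdx w) ∨
  (p.2 < p.1 ∧ ∀ k ∈ Iset w ∪ Jset w, ¬ (p.2 < k ∧ k < p.1))

/-! ### Cyclic peaks and rotations -/

/-- The positions `r` of the (non-wrap-around) cyclic peaks: `N` at `r` and `E` at `r+1`. -/
def peakPositions (w : List Bool) : List ℕ :=
  (List.range w.length).filter fun r => !letterAt w r && letterAt w (r + 1)

/-- The position of the `E` step of the `l`-th cyclic peak (`1 ≤ l ≤ w`); the `w`-th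
cyclic peak is the wrap-around peak, whose `E` step is at position `0`. -/
def shiftPos (w : List Bool) (l : ℕ) : ℕ :=
  if l = numVal w then 0 else (peakPositions w).getD (l - 1) 0 + 1

/-- The word `ν̄(l)` obtained by cyclically shifting `w = ν̄` to start at the `E` step of
the `l`-th cyclic peak. -/
def rotWord (w : List Bool) (l : ℕ) : List Bool :=
  w.drop (shiftPos w l) ++ w.take (shiftPos w l)

/-- The effect of the rotation on positions. -/
def rotPos (w : List Bool) (l : ℕ) (p : ℕ) : ℕ :=
  (p + w.length - shiftPos w l) % w.length

/-- The position of the `E` step with index `i`. -/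
def Epos (w : List Bool) (i : ℕ) : ℕ :=
  (((List.range w.length).filter fun p => letterAt w p && decide (idxAt w p = i))).headD 0

/-- The position of the `N` step with index `j`. -/
def Npos (w : List Bool) (j : ℕ) : ℕ :=
  (((List.range w.length).filter fun p => !letterAt w p && decide (idxAt w p = j))).headD 0

/-- The map induced on arcs by the cyclic rotation taking `ν̄` to `ν̄(l)`. -/
def arcMap (w : List Bool) (l : ℕ) (p : ℕ × ℕ) : ℕ × ℕ :=
  (idxAt (rotWord w l) (rotPos w l (Epos w p.1)),
   idxAt (rotWord w l) (rotPos w l (Npos w p.2)))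

/-- The arc determined by the `l`-th cyclic peak. -/
def peakArc (w : List Bool) (l : ℕ) : ℕ × ℕ :=
  if l = numVal w then (1, nIdx w)
  else (idxAt w ((peakPositions w).getD (l - 1) 0 + 1), idxAt w ((peakPositions w).getD (l - 1) 0))

end FP

namespace FP
namespace Aux

open LGraph

variable {G : LGraph} {n : ℕ}

/-- endpoints bounds from wellformedness -/
lemma wf_bounds (hwf : G.WF n) (e : Fin G.m) :
    1 ≤ G.tail e ∧ G.tail e < G.head e ∧ G.head e ≤ n := by
  exact hwf _ (G.edges.get_mem e)

lemma tail_ne_head (hwf : G.WF n) (e : Fin G.m) : G.tail e ≠ G.head e :=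
  ne_of_lt (wf_bounds hwf e).2.1

/-- acyclicity excludes bidirectional edges -/
lemma no_bidir (hacyc : G.Acyclic) (e : Fin G.m) : G.etype e ≠ .bidirectional := by
  intro h
  apply hacyc (G.tail e)
  have h1 : G.DStep (G.tail e) (G.head e) := ⟨e, Or.inl ⟨rfl, rfl, by simp [h]⟩⟩
  have h2 : G.DStep (G.head e) (G.tail e) := ⟨e, Or.inr ⟨rfl, rfl, by simp [h]⟩⟩
  exact Relation.TransGen.head h1 (Relation.TransGen.single h2)

/-- coefficient of the netflow functional at vertex `v` on edge `e` -/
noncomputable def coef (G : LGraph) (v : ℕ) (e : Fin G.m) : ℝ :=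
  (if G.tail e = v then 1 else 0) - (if G.head e = v then 1 else 0)

lemma netflow_eq (x : Fin G.m → ℝ) (v : ℕ) :
    G.netflow x v = ∑ e : Fin G.m, coef G v e * x e := by
  unfold LGraph.netflow coef
  refine Finset.sum_congr rfl fun e _ => ?_
  split_ifs <;> ring

lemma netflow_add (x y : Fin G.m → ℝ) (v : ℕ) :
    G.netflow (x + y) v = G.netflow x v + G.netflow y v := by
  simp only [netflow_eq, Pi.add_apply, mul_add, Finset.sum_add_distrib]

lemma netflow_sub (x y : Fin G.m → ℝ) (v : ℕ) :
    G.netflow (x - y) v = G.netflow x v - G.netflow y v := by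
  simp only [netflow_eq, Pi.sub_apply, mul_sub, Finset.sum_sub_distrib]

lemma netflow_smul (c : ℝ) (x : Fin G.m → ℝ) (v : ℕ) :
    G.netflow (c • x) v = c * G.netflow x v := by
  simp only [netflow_eq, Pi.smul_apply, smul_eq_mul, Finset.mul_sum]
  exact Finset.sum_congr rfl fun e _ => by ring

lemma netflow_combo (a b : ℝ) (x y : Fin G.m → ℝ) (v : ℕ) :
    G.netflow (a • x + b • y) v = a * G.netflow x v + b * G.netflow y v := by
  rw [netflow_add, netflow_smul, netflow_smul]

lemma flowSet_convex : Convex ℝ G.flowSet := by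
  intro x hx y hy a b ha hb hab
  constructor
  · intro v
    rw [netflow_combo, hx.1 v, hy.1 v]
    split_ifs <;> nlinarith
  · intro e
    constructor
    · intro h
      have := (hx.2 e).1 h
      have := (hy.2 e).1 h
      have : 0 ≤ a * x e + b * y e := by positivity
      simpa using this
    · intro h
      have h1 := (hx.2 e).2 h
      have h2 := (hy.2 e).2 h
      have : a * x e + b * y e ≤ 0 := by
        have := mul_nonpos_of_nonneg_of_nonpos ha h1
        have := mul_nonpos_of_nonneg_of_nonpos hb h2
        linarith
      simpa using this

end Aux
end FP

namespace FP
namespace Aux2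
open LGraph FP.Aux

variable {G : LGraph} {n : ℕ}

lemma not_both_mem (R : Route G) (e : Fin G.m) (h1 : (e, true) ∈ R.steps)
    (h2 : (e, false) ∈ R.steps) : False := by
  have := List.inj_on_of_nodup_map R.nodup h1 h2 rfl
  simp at this

lemma vec_of_mem_true (R : Route G) {e : Fin G.m} (h : (e, true) ∈ R.steps) : R.vec e = 1 := by
  simp [Route.vec, h]

lemma vec_of_mem_false (R : Route G) {e : Fin G.m} (h : (e, false) ∈ R.steps) : R.vec e = -1 := by
  have : ¬ (e, true) ∈ R.steps := fun h1 => not_both_mem R e h1 h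
  simp [Route.vec, h, this]

lemma vec_of_not_mem (R : Route G) {e : Fin G.m} (h1 : (e, true) ∉ R.steps)
    (h2 : (e, false) ∉ R.steps) : R.vec e = 0 := by
  simp [Route.vec, h1, h2]

lemma vec_cases (R : Route G) (e : Fin G.m) :
    ((e, true) ∈ R.steps ∧ R.vec e = 1) ∨ ((e, false) ∈ R.steps ∧ R.vec e = -1) ∨
    ((e, true) ∉ R.steps ∧ (e, false) ∉ R.steps ∧ R.vec e = 0) := by
  by_cases h1 : (e, true) ∈ R.steps
  · exact Or.inl ⟨h1, vec_of_mem_true R h1⟩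
  by_cases h2 : (e, false) ∈ R.steps
  · exact Or.inr (Or.inl ⟨h2, vec_of_mem_false R h2⟩)
  · exact Or.inr (Or.inr ⟨h1, h2, vec_of_not_mem R h1 h2⟩)

/-- vertex-indicator contribution of one traversal step -/
noncomputable def g (G : LGraph) (v : ℕ) (s : Fin G.m × Bool) : ℝ :=
  (if G.sv s = v then 1 else 0) - (if G.ev s = v then 1 else 0)

/-- telescoping sum of step contributions for a chained list -/
lemma telescope (v : ℕ) : ∀ (L : List (Fin G.m × Bool)) (h : L ≠ [])
    (_ : L.Chain' (fun s t => G.ev s = G.sv t)),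
    (L.map (g G v)).sum =
      (if G.sv (L.head h) = v then 1 else 0) - (if G.ev (L.getLast h) = v then 1 else 0)
  | [], h, _ => absurd rfl h
  | [s], _, _ => by simp [g]; rfl
  | s :: t :: L, _, hch => by
    have hch' := (List.isChain_cons_cons.mp hch).2
    have hst := (List.isChain_cons_cons.mp hch).1
    have ih := telescope v (t :: L) (by simp) hch'
    simp only [List.map_cons, List.sum_cons] at ih ⊢
    rw [List.getLast_cons (by simp)]
    simp only [List.head_cons] at ih ⊢
    rw [ih, g, hst]
    by_cases h1 : G.sv s = v <;> by_cases h2 : G.sv t = v <;>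
      by_cases h3 : G.ev ((t :: L).getLast (by simp)) = v <;> norm_num [h1, h2, h3]

/-- the netflow of a route vector, as a sum over steps -/
lemma netflow_vec (hwf : G.WF n) (R : Route G) (v : ℕ) :
    G.netflow R.vec v = (R.steps.map (g G v)).sum := by
  have hnd : R.steps.Nodup := (R.nodup).of_map
  rw [netflow_eq]
  have hzero : ∀ e ∈ Finset.univ \ (R.steps.map Prod.fst).toFinset,
      coef G v e * R.vec e = 0 := by
    intro e he
    simp only [Finset.mem_sdiff, List.mem_toFinset, List.mem_map] at he
    have h1 : (e, true) ∉ R.steps := fun h => he.2 ⟨_, h, rfl⟩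
    have h2 : (e, false) ∉ R.steps := fun h => he.2 ⟨_, h, rfl⟩
    rw [vec_of_not_mem R h1 h2, mul_zero]
  have hsub : (R.steps.map Prod.fst).toFinset ⊆ Finset.univ := Finset.subset_univ _
  rw [← Finset.sum_subset hsub (fun e _ he => by
    exact hzero e (Finset.mem_sdiff.mpr ⟨Finset.mem_univ _, he⟩))]
  have himg : (R.steps.map Prod.fst).toFinset = R.steps.toFinset.image Prod.fst := by
    ext a; simp
  rw [himg, Finset.sum_image (fun s hs t ht hst => by
    exact List.inj_on_of_nodup_map R.nodup (List.mem_toFinset.mp hs)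
      (List.mem_toFinset.mp ht) hst)]
  rw [← List.sum_toFinset _ hnd]
  refine Finset.sum_congr rfl fun s hs => ?_
  have hsmem : s ∈ R.steps := List.mem_toFinset.mp hs
  rcases s with ⟨e, b⟩
  cases b
  · rw [vec_of_mem_false R hsmem]
    simp only [coef, g, sv, ev, if_neg, Bool.false_eq_true, ite_false]
    split_ifs <;> ring
  · rw [vec_of_mem_true R hsmem]
    simp only [coef, g, sv, ev, ite_true]
    split_ifs <;> ring

/-- Route vectors are flows. -/
lemma vec_mem_flowSet (hwf : G.WF n) (hn : 2 ≤ n) (hsrc : G.src = 1) (hsnk : G.snk = n)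
    (R : Route G) : R.vec ∈ G.flowSet := by
  constructor
  · intro v
    rw [netflow_vec hwf R v, telescope v R.steps R.ne R.chain, R.first, R.last]
    have : G.src ≠ G.snk := by omega
    congr 1 <;> simp [eq_comm]
  · intro e
    constructor
    · intro hfwd
      rcases vec_cases R e with ⟨hm, hv⟩ | ⟨hm, hv⟩ | ⟨_, _, hv⟩
      · rw [hv]; norm_num
      · exact absurd hfwd ((R.dir _ hm).2 rfl)
      · rw [hv]
    · intro hbwd
      rcases vec_cases R e with ⟨hm, hv⟩ | ⟨hm, hv⟩ | ⟨_, _, hv⟩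
      · exact absurd hbwd ((R.dir _ hm).1 rfl)
      · rw [hv]; norm_num
      · rw [hv]

end Aux2
end FP

namespace FP
namespace Aux3
open LGraph FP.Aux FP.Aux2

variable {G : LGraph} {n : ℕ} {x : Fin G.m → ℝ}

/-- total flow out of a vertex -/
noncomputable def out (G : LGraph) (x : Fin G.m → ℝ) (v : ℕ) : ℝ :=
  ∑ e : Fin G.m, ((if G.tail e = v then max (x e) 0 else 0) +
    (if G.head e = v then max (-(x e)) 0 else 0))

/-- total flow into a vertex -/
noncomputable def inn (G : LGraph) (x : Fin G.m → ℝ) (v : ℕ) : ℝ :=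
  ∑ e : Fin G.m, ((if G.tail e = v then max (-(x e)) 0 else 0) +
    (if G.head e = v then max (x e) 0 else 0))

lemma out_sub_inn (v : ℕ) : out G x v - inn G x v = G.netflow x v := by
  unfold out inn LGraph.netflow
  rw [← Finset.sum_sub_distrib]
  refine Finset.sum_congr rfl fun e _ => ?_
  simp only [max_def]
  split_ifs <;> linarith

lemma inn_nonneg (v : ℕ) : 0 ≤ inn G x v := by
  refine Finset.sum_nonneg fun e _ => add_nonneg ?_ ?_ <;>
    · split_ifs <;> simp [le_max_right]

/-- A traversal step carrying positive flow. -/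
def Good (x : Fin G.m → ℝ) (s : Fin G.m × Bool) : Prop :=
  (s.2 = true ∧ 0 < x s.1) ∨ (s.2 = false ∧ x s.1 < 0)

lemma inn_pos_of {e : Fin G.m} {v : ℕ}
    (h : (G.head e = v ∧ 0 < x e) ∨ (G.tail e = v ∧ x e < 0)) : 0 < inn G x v := by
  refine Finset.sum_pos' (fun e' _ => add_nonneg ?_ ?_) ⟨e, Finset.mem_univ e, ?_⟩
  · split_ifs <;> simp [le_max_right]
  · split_ifs <;> simp [le_max_right]
  · rcases h with ⟨h1, h2⟩ | ⟨h1, h2⟩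
    · have : (0:ℝ) < max (x e) 0 := lt_max_of_lt_left h2
      have h0 : (0:ℝ) ≤ (if G.tail e = v then max (-(x e)) 0 else 0) := by
        split_ifs <;> simp [le_max_right]
      rw [if_pos h1]; linarith
    · have : (0:ℝ) < max (-(x e)) 0 := lt_max_of_lt_left (by linarith)
      have h0 : (0:ℝ) ≤ (if G.head e = v then max (x e) 0 else 0) := by
        split_ifs <;> simp [le_max_right]
      rw [if_pos h1]; linarith

lemma inn_pos {s : Fin G.m × Bool} {v : ℕ} (hg : Good x s) (hv : G.ev s = v) :
    0 < inn G x v := by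
  rcases hg with ⟨h2, hx⟩ | ⟨h2, hx⟩
  · refine inn_pos_of (Or.inl ⟨?_, hx⟩)
    rw [← hv]; simp [ev, h2]
  · refine inn_pos_of (Or.inr ⟨?_, hx⟩)
    rw [← hv]; simp [ev, h2]

lemma exists_good_out {v : ℕ} (h : 0 < out G x v) : ∃ s, Good x s ∧ G.sv s = v := by
  by_contra hno
  push_neg at hno
  refine absurd h (not_lt.mpr (Finset.sum_nonpos fun e _ => ?_))
  have h1 : G.tail e = v → x e ≤ 0 := by
    intro ht
    by_contra hx
    exact (hno (e, true) (Or.inl ⟨rfl, lt_of_not_ge hx⟩)) (by simp [sv, ht])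
  have h2 : G.head e = v → 0 ≤ x e := by
    intro ht
    by_contra hx
    exact (hno (e, false) (Or.inr ⟨rfl, lt_of_not_ge hx⟩)) (by simp [sv, ht])
  have : (if G.tail e = v then max (x e) 0 else 0) ≤ 0 := by
    split_ifs with ht
    · exact max_le (h1 ht) le_rfl
    · exact le_rfl
  have : (if G.head e = v then max (-(x e)) 0 else 0) ≤ 0 := by
    split_ifs with ht
    · exact max_le (by linarith [h2 ht]) le_rfl
    · exact le_rfl
  linarith

lemma good_dstep (hsign : ∀ e : Fin G.m, (G.etype e = .forward → 0 ≤ x e) ∧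
      (G.etype e = .backward → x e ≤ 0)) {s : Fin G.m × Bool} (hg : Good x s) :
    G.DStep (G.sv s) (G.ev s) := by
  rcases hg with ⟨h2, hx⟩ | ⟨h2, hx⟩
  · refine ⟨s.1, Or.inl ⟨by simp [sv, h2], by simp [ev, h2], ?_⟩⟩
    intro hb
    exact absurd ((hsign s.1).2 hb) (not_le.mpr hx)
  · refine ⟨s.1, Or.inr ⟨by simp [sv, h2], by simp [ev, h2], ?_⟩⟩
    intro hb
    exact absurd ((hsign s.1).1 hb) (not_le.mpr hx)

/-- the current endpoint of a partial path -/
def vend (G : LGraph) (a : ℕ) (L : List (Fin G.m × Bool)) : ℕ :=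
  if h : L = [] then a else G.ev (L.getLast h)

/-- the vertices visited by a partial path -/
def verts (G : LGraph) (a : ℕ) (L : List (Fin G.m × Bool)) : List ℕ := a :: L.map G.ev

/-- invariant for the path-growing procedure -/
structure Inv (G : LGraph) (x : Fin G.m → ℝ) (a : ℕ) (L : List (Fin G.m × Bool)) : Prop where
  chain : L.Chain' (fun s t => G.ev s = G.sv t)
  first : ∀ h : L ≠ [], G.sv (L.head h) = a
  good : ∀ s ∈ L, Good x s
  nodup : (verts G a L).Nodup
  reach : ∀ w ∈ verts G a L, w = vend G a L ∨ Relation.TransGen G.DStep w (vend G a L)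

lemma vend_nil (a : ℕ) : vend G a [] = a := by simp [vend]

lemma vend_append (a : ℕ) (L : List (Fin G.m × Bool)) (s : Fin G.m × Bool) :
    vend G a (L ++ [s]) = G.ev s := by
  rw [vend, dif_neg (by simp)]
  simp [List.getLast_append]

lemma last_ev (a : ℕ) {L : List (Fin G.m × Bool)} (h : L ≠ []) :
    G.ev (L.getLast h) = vend G a L := by
  rw [vend, dif_neg h]

lemma inv_nil (a : ℕ) : Inv G x a [] := by
  refine ⟨List.isChain_nil, fun h => absurd rfl h, by simp, by simp [verts], ?_⟩
  intro w hw
  left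
  simpa [verts, vend] using hw

lemma inv_extend (hacyc : G.Acyclic)
    (hsign : ∀ e : Fin G.m, (G.etype e = .forward → 0 ≤ x e) ∧
      (G.etype e = .backward → x e ≤ 0))
    {a : ℕ} {L : List (Fin G.m × Bool)} (hI : Inv G x a L)
    (s : Fin G.m × Bool) (hg : Good x s) (hsv : G.sv s = vend G a L) :
    Inv G x a (L ++ [s]) := by
  have hds : G.DStep (vend G a L) (G.ev s) := by
    have h := good_dstep hsign hg
    rwa [hsv] at h
  have hnm : G.ev s ∉ verts G a L := by
    intro hmem
    rcases hI.reach _ hmem with h | h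
    · refine hacyc (G.ev s) (Relation.TransGen.single ?_)
      rw [← h] at hds; exact hds
    · exact hacyc _ (Relation.TransGen.trans h (Relation.TransGen.single hds))
  have hverts : verts G a (L ++ [s]) = verts G a L ++ [G.ev s] := by
    simp [verts]
  refine ⟨?_, ?_, ?_, ?_, ?_⟩
  · show List.IsChain _ (L ++ [s])
    rw [List.isChain_append]
    refine ⟨hI.chain, by simp, ?_⟩
    intro p hp q hq
    simp only [List.head?_cons, Option.mem_def, Option.some_inj] at hq
    subst hq
    rcases List.eq_nil_or_concat L with rfl | ⟨L', t, rfl⟩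
    · simp at hp
    · simp only [List.concat_eq_append] at hp hsv
      rw [List.getLast?_concat] at hp
      simp only [Option.mem_def, Option.some_inj] at hp
      subst hp
      rw [hsv, ← last_ev a (L := L' ++ [t]) (by simp)]
      congr 1
      simp [List.getLast_append]
  · intro h
    rcases L with _ | ⟨hd, tl⟩
    · simpa [vend_nil] using hsv
    · simpa using hI.first (by simp)
  · intro t ht
    rcases List.mem_append.mp ht with h | h
    · exact hI.good t h
    · rw [List.mem_singleton.mp h]; exact hg
  · rw [hverts, List.nodup_append]
    exact ⟨hI.nodup, by simp, fun b hb c hc h => hnm (by rw [List.mem_singleton] at hc; rw [← hc, ← h]; exact hb)⟩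
  · rw [hverts, vend_append]
    intro w hw
    rcases List.mem_append.mp hw with h | h
    · rcases hI.reach _ h with h' | h'
      · right; rw [h']; exact Relation.TransGen.single hds
      · right; exact Relation.TransGen.trans h' (Relation.TransGen.single hds)
    · left; exact List.mem_singleton.mp h

lemma inv_length (hwf : G.WF n) {a : ℕ} {L : List (Fin G.m × Bool)} (hI : Inv G x a L)
    (ha1 : 1 ≤ a) (han : a ≤ n) : L.length + 1 ≤ n := by
  have hsub : (verts G a L).toFinset ⊆ Finset.Icc 1 n := by
    intro w hw
    rw [List.mem_toFinset] at hw
    rcases List.mem_cons.mp hw with rfl | hw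
    · exact Finset.mem_Icc.mpr ⟨ha1, han⟩
    · obtain ⟨s, _, rfl⟩ := List.mem_map.mp hw
      obtain ⟨hb1, hb2, hb3⟩ := wf_bounds hwf (n := n) s.1
      have hev : G.ev s = G.tail s.1 ∨ G.ev s = G.head s.1 := by
        rcases s with ⟨e, b⟩; cases b <;> simp [ev]
      rcases hev with h | h <;> rw [h] <;> exact Finset.mem_Icc.mpr ⟨by omega, by omega⟩
  have hcard := Finset.card_le_card hsub
  rw [List.toFinset_card_of_nodup hI.nodup, Nat.card_Icc] at hcard
  simpa [verts] using hcard

end Aux3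
end FP

namespace FP
namespace Aux4
open LGraph FP.Aux FP.Aux2 FP.Aux3

variable {G : LGraph} {n : ℕ} {x : Fin G.m → ℝ}

lemma exists_step (hn : 2 ≤ n) (hsrc : G.src = 1) (hsnk : G.snk = n)
    (hx : x ∈ G.flowSet) {L : List (Fin G.m × Bool)} (hI : Inv G x G.src L)
    (hv : vend G G.src L ≠ G.snk) :
    ∃ s, Good x s ∧ G.sv s = vend G G.src L := by
  apply exists_good_out
  have hio := out_sub_inn (G := G) (x := x) (vend G G.src L)
  have hnf := hx.1 (vend G G.src L)
  have hin := inn_nonneg (G := G) (x := x) (vend G G.src L)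
  rw [if_neg hv] at hnf
  rcases List.eq_nil_or_concat L with rfl | ⟨L', t, rfl⟩
  · rw [vend_nil] at hnf hio hin ⊢
    rw [if_pos rfl] at hnf
    linarith
  · simp only [List.concat_eq_append] at hI hio hnf hin ⊢
    have hlast : G.ev t = vend G G.src (L' ++ [t]) := by
      rw [← last_ev G.src (L := L' ++ [t]) (by simp)]
      congr 1
      simp [List.getLast_append]
    have hgood : Good x t := hI.good t (by simp)
    have hpos := inn_pos hgood hlast
    have : (0:ℝ) ≤ (if vend G G.src (L' ++ [t]) = G.src then (1:ℝ) else 0) := by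
      split_ifs <;> norm_num
    linarith

lemma route_reach (hacyc : G.Acyclic) (hwf : G.WF n) (hn : 2 ≤ n)
    (hsrc : G.src = 1) (hsnk : G.snk = n) (hx : x ∈ G.flowSet) :
    ∀ (k : ℕ) (L : List (Fin G.m × Bool)), Inv G x G.src L → n ≤ L.length + 1 + k →
      ∃ L', Inv G x G.src L' ∧ ∃ h : L' ≠ [], vend G G.src L' = G.snk := by
  have hsign : ∀ e : Fin G.m, (G.etype e = .forward → 0 ≤ x e) ∧
      (G.etype e = .backward → x e ≤ 0) := hx.2
  intro k
  induction k with
  | zero =>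
    intro L hI hlen
    by_cases hv : vend G G.src L = G.snk
    · refine ⟨L, hI, ?_, hv⟩
      intro hnil
      subst hnil
      rw [vend_nil] at hv
      omega
    · obtain ⟨s, hg, hsv⟩ := exists_step hn hsrc hsnk hx hI hv
      have hI' := inv_extend hacyc hsign hI s hg hsv
      have := inv_length hwf hI' (by omega) (by omega)
      simp only [List.length_append, List.length_singleton] at this
      omega
  | succ k ih =>
    intro L hI hlen
    by_cases hv : vend G G.src L = G.snk
    · refine ⟨L, hI, ?_, hv⟩
      intro hnil
      subst hnil
      rw [vend_nil] at hv
      omega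
    · obtain ⟨s, hg, hsv⟩ := exists_step hn hsrc hsnk hx hI hv
      exact ih (L ++ [s]) (inv_extend hacyc hsign hI s hg hsv)
        (by simp only [List.length_append, List.length_singleton]; omega)

/-- every flow supports a route carrying positive flow on all its steps -/
lemma exists_route (hacyc : G.Acyclic) (hwf : G.WF n) (hn : 2 ≤ n)
    (hsrc : G.src = 1) (hsnk : G.snk = n) (hx : x ∈ G.flowSet) :
    ∃ R : Route G, ∀ s ∈ R.steps, Good x s := by
  obtain ⟨L, hI, hne, hv⟩ := route_reach hacyc hwf hn hsrc hsnk hx n [] (inv_nil G.src)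
    (by omega)
  have hLnd : L.Nodup := by
    have h1 : (L.map G.ev).Nodup := (List.nodup_cons.mp hI.nodup).2
    exact h1.of_map
  refine ⟨⟨L, hne, hI.chain, hI.first hne, by rw [last_ev G.src hne]; exact hv, ?_, ?_⟩,
    fun s hs => hI.good s hs⟩
  · intro s hs
    rcases hI.good s hs with ⟨h2, hxs⟩ | ⟨h2, hxs⟩
    · constructor
      · intro _ hb
        exact absurd ((hx.2 s.1).2 hb) (not_le.mpr hxs)
      · intro hf; rw [h2] at hf; simp at hf
    · constructor
      · intro hf; rw [h2] at hf; simp at hf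
      · intro _ hb
        exact absurd ((hx.2 s.1).1 hb) (not_le.mpr hxs)
  · refine hLnd.map_on ?_
    intro s hs t ht hst
    rcases hI.good s hs with ⟨hs2, hxs⟩ | ⟨hs2, hxs⟩ <;>
      rcases hI.good t ht with ⟨ht2, hxt⟩ | ⟨ht2, hxt⟩
    · exact Prod.ext hst (by rw [hs2, ht2])
    · rw [hst] at hxs; linarith
    · rw [hst] at hxs; linarith
    · exact Prod.ext hst (by rw [hs2, ht2])

/-- a sign-respecting circulation on an acyclic graph vanishes -/
lemma circulation_zero (hacyc : G.Acyclic) (hwf : G.WF n)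
    (hnf : ∀ v, G.netflow x v = 0)
    (hsign : ∀ e : Fin G.m, (G.etype e = .forward → 0 ≤ x e) ∧
      (G.etype e = .backward → x e ≤ 0)) : x = 0 := by
  funext e₀
  by_contra he₀
  simp only [Pi.zero_apply] at he₀
  set a : ℕ := if 0 < x e₀ then G.head e₀ else G.tail e₀ with ha
  obtain ⟨hb1, hb2, hb3⟩ := wf_bounds hwf (n := n) e₀
  have ha1 : 1 ≤ a := by rw [ha]; split_ifs <;> omega
  have han : a ≤ n := by rw [ha]; split_ifs <;> omega
  have key : ∀ (k : ℕ) (L : List (Fin G.m × Bool)), Inv G x a L →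
      0 < inn G x (vend G a L) → n ≤ L.length + k → False := by
    intro k
    induction k with
    | zero =>
      intro L hI _ hlen
      have := inv_length hwf hI ha1 han
      omega
    | succ k ih =>
      intro L hI hpos hlen
      have hout : 0 < out G x (vend G a L) := by
        have hio := out_sub_inn (G := G) (x := x) (vend G a L)
        rw [hnf] at hio
        linarith
      obtain ⟨s, hg, hsv⟩ := exists_good_out hout
      refine ih (L ++ [s]) (inv_extend hacyc hsign hI s hg hsv) ?_
        (by simp only [List.length_append, List.length_singleton]; omega)
      rw [vend_append]
      exact inn_pos hg rfl
  refine key n [] (inv_nil a) ?_ (by simp)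
  rw [vend_nil]
  rcases lt_or_gt_of_ne he₀ with h | h
  · refine inn_pos_of (Or.inr ⟨?_, h⟩)
    rw [ha, if_neg (by linarith)]
  · refine inn_pos_of (Or.inl ⟨?_, h⟩)
    rw [ha, if_pos h]

end Aux4
end FP

namespace FP
namespace Aux5
open LGraph FP.Aux FP.Aux2 FP.Aux3 FP.Aux4

variable {G : LGraph} {n : ℕ}

/-- the set of signed characteristic vectors of routes -/
def SR (G : LGraph) : Set (Fin G.m → ℝ) := { y | ∃ R : Route G, y = R.vec }

lemma decomp_body (hacyc : G.Acyclic) (hwf : G.WF n) (hn : 2 ≤ n)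
    (hsrc : G.src = 1) (hsnk : G.snk = n) (s : Finset (Fin G.m))
    (x : Fin G.m → ℝ) (hx : x ∈ G.flowSet) (hsupp : ∀ e, x e ≠ 0 → e ∈ s)
    (ih : ∀ e ∈ s, ∀ z ∈ G.flowSet, (∀ e', z e' ≠ 0 → e' ∈ s.erase e) →
      z ∈ convexHull ℝ (SR G)) :
    x ∈ convexHull ℝ (SR G) := by
  obtain ⟨R, hgood⟩ := exists_route hacyc hwf hn hsrc hsnk hx
  have hTne : ((R.steps.map fun t => |x t.1|).toFinset).Nonempty := by
    refine ⟨|x (R.steps.head R.ne).1|, ?_⟩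
    rw [List.mem_toFinset]
    exact List.mem_map.mpr ⟨_, List.head_mem R.ne, rfl⟩
  set θ : ℝ := ((R.steps.map fun t => |x t.1|).toFinset).min' hTne with hθdef
  have hθle : ∀ t ∈ R.steps, θ ≤ |x t.1| := by
    intro t ht
    exact Finset.min'_le _ _ (List.mem_toFinset.mpr (List.mem_map.mpr ⟨t, ht, rfl⟩))
  obtain ⟨t₀, ht₀, hθeq⟩ : ∃ t ∈ R.steps, |x t.1| = θ := by
    have := Finset.min'_mem _ hTne
    rw [List.mem_toFinset, List.mem_map] at this
    obtain ⟨t, ht, heq⟩ := this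
    exact ⟨t, ht, heq⟩
  have hθpos : 0 < θ := by
    rw [← hθeq]
    rcases hgood t₀ ht₀ with ⟨_, h⟩ | ⟨_, h⟩ <;> simp [abs_pos] <;> linarith
  have hxmem : ∀ e : Fin G.m, (e, true) ∈ R.steps → 0 < x e := by
    intro e he
    rcases hgood _ he with ⟨_, h⟩ | ⟨h, _⟩
    · exact h
    · simp at h
  have hxmem' : ∀ e : Fin G.m, (e, false) ∈ R.steps → x e < 0 := by
    intro e he
    rcases hgood _ he with ⟨h, _⟩ | ⟨_, h⟩
    · simp at h
    · exact h
  have hRflow := vec_mem_flowSet hwf hn hsrc hsnk R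
  by_cases hθ1 : 1 ≤ θ
  · -- x = R.vec
    have hy0 : x - R.vec = 0 := by
      refine circulation_zero hacyc hwf (fun v => ?_) (fun e => ⟨?_, ?_⟩)
      · rw [netflow_sub, hx.1 v, hRflow.1 v, sub_self]
      · intro hfwd
        rcases vec_cases R e with ⟨hm, hv⟩ | ⟨hm, hv⟩ | ⟨_, _, hv⟩
        · have h1 := hxmem e hm
          have h2 := hθle _ hm
          rw [abs_of_pos h1] at h2
          simp only [Pi.sub_apply, hv]
          linarith
        · exact absurd ((hx.2 e).1 hfwd) (not_le.mpr (hxmem' e hm))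
        · simp only [Pi.sub_apply, hv, sub_zero]
          exact (hx.2 e).1 hfwd
      · intro hbwd
        rcases vec_cases R e with ⟨hm, hv⟩ | ⟨hm, hv⟩ | ⟨_, _, hv⟩
        · exact absurd ((hx.2 e).2 hbwd) (not_le.mpr (hxmem e hm))
        · have h1 := hxmem' e hm
          have h2 := hθle _ hm
          rw [abs_of_neg h1] at h2
          simp only [Pi.sub_apply, hv]
          linarith
        · simp only [Pi.sub_apply, hv, sub_zero]
          exact (hx.2 e).2 hbwd
    have : x = R.vec := by
      have := sub_eq_zero.mp hy0
      exact this
    exact subset_convexHull ℝ (SR G) ⟨R, this⟩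
  · push_neg at hθ1
    have hθne : (1:ℝ) - θ ≠ 0 := by linarith
    have hθinv : (0:ℝ) < (1 - θ)⁻¹ := by
      apply inv_pos.mpr; linarith
    set z : Fin G.m → ℝ := (1 - θ)⁻¹ • (x - θ • R.vec) with hzdef
    have hzval : ∀ e, z e = (1 - θ)⁻¹ * (x e - θ * R.vec e) := by
      intro e; simp [hzdef]
    have hzflow : z ∈ G.flowSet := by
      constructor
      · intro v
        rw [hzdef, netflow_smul, netflow_sub, netflow_smul, hx.1 v, hRflow.1 v]
        field_simp
      · intro e
        constructor
        · intro hfwd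
          rw [hzval]
          refine mul_nonneg hθinv.le ?_
          rcases vec_cases R e with ⟨hm, hv⟩ | ⟨hm, hv⟩ | ⟨_, _, hv⟩
          · have h1 := hxmem e hm
            have h2 := hθle _ hm
            rw [abs_of_pos h1] at h2
            rw [hv]; linarith
          · exact absurd ((hx.2 e).1 hfwd) (not_le.mpr (hxmem' e hm))
          · rw [hv]
            have := (hx.2 e).1 hfwd
            linarith
        · intro hbwd
          rw [hzval]
          refine mul_nonpos_of_nonneg_of_nonpos hθinv.le ?_
          rcases vec_cases R e with ⟨hm, hv⟩ | ⟨hm, hv⟩ | ⟨_, _, hv⟩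
          · exact absurd ((hx.2 e).2 hbwd) (not_le.mpr (hxmem e hm))
          · have h1 := hxmem' e hm
            have h2 := hθle _ hm
            rw [abs_of_neg h1] at h2
            rw [hv]; linarith
          · rw [hv]
            have := (hx.2 e).2 hbwd
            linarith
    have he₀s : t₀.1 ∈ s := by
      refine hsupp t₀.1 ?_
      intro h0
      rw [h0, abs_zero] at hθeq
      linarith
    have hzsupp : ∀ e', z e' ≠ 0 → e' ∈ s.erase t₀.1 := by
      intro e' hz'
      rw [hzval] at hz'
      have hne2 : x e' - θ * R.vec e' ≠ 0 := by
        intro h; rw [h, mul_zero] at hz'; exact hz' rfl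
      have hxne : x e' ≠ 0 := by
        intro hx0
        rcases vec_cases R e' with ⟨hm, hv⟩ | ⟨hm, hv⟩ | ⟨_, _, hv⟩
        · exact absurd hx0 (ne_of_gt (hxmem _ hm))
        · exact absurd hx0 (ne_of_lt (hxmem' _ hm))
        · rw [hx0, hv, mul_zero, sub_zero] at hne2; exact hne2 rfl
      refine Finset.mem_erase.mpr ⟨?_, hsupp _ hxne⟩
      intro heq
      rcases t₀ with ⟨e₀, b₀⟩
      simp only at heq
      subst heq
      cases b₀
      · have h1 := hxmem' _ ht₀
        rw [abs_of_neg h1] at hθeq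
        rw [vec_of_mem_false R ht₀] at hne2
        apply hne2
        rw [← hθeq]; ring
      · have h1 := hxmem _ ht₀
        rw [abs_of_pos h1] at hθeq
        rw [vec_of_mem_true R ht₀] at hne2
        apply hne2
        rw [← hθeq]; ring
    have hzhull := ih t₀.1 he₀s z hzflow hzsupp
    have hvhull := subset_convexHull ℝ (SR G) ⟨R, rfl⟩
    have hcomb := (convex_convexHull ℝ (SR G)) hvhull hzhull hθpos.le
      (by linarith : (0:ℝ) ≤ 1 - θ) (by ring)
    have hxeq : x = θ • R.vec + (1 - θ) • z := by
      funext e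
      simp only [Pi.add_apply, Pi.smul_apply, smul_eq_mul, hzval]
      field_simp
      ring
    rw [hxeq]
    exact hcomb

lemma decomp (hacyc : G.Acyclic) (hwf : G.WF n) (hn : 2 ≤ n)
    (hsrc : G.src = 1) (hsnk : G.snk = n) :
    ∀ x ∈ G.flowSet, x ∈ convexHull ℝ (SR G) := by
  suffices h : ∀ (N : ℕ) (s : Finset (Fin G.m)), s.card ≤ N →
      ∀ x ∈ G.flowSet, (∀ e, x e ≠ 0 → e ∈ s) → x ∈ convexHull ℝ (SR G) by
    intro x hx
    exact h (Finset.univ.card) Finset.univ le_rfl x hx (fun e _ => Finset.mem_univ e)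
  intro N
  induction N with
  | zero =>
    intro s hcard x hx hsupp
    refine decomp_body hacyc hwf hn hsrc hsnk s x hx hsupp ?_
    intro e he
    rw [Nat.le_zero, Finset.card_eq_zero] at hcard
    subst hcard
    simp at he
  | succ N ih =>
    intro s hcard x hx hsupp
    refine decomp_body hacyc hwf hn hsrc hsnk s x hx hsupp ?_
    intro e he z hz hzsupp
    refine ih (s.erase e) ?_ z hz hzsupp
    have := Finset.card_erase_of_mem he
    omega

end Aux5
end FP

namespace FP
namespace Aux6
open LGraph FP.Aux FP.Aux2 FP.Aux3 FP.Aux4 FP.Aux5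

variable {G : LGraph} {n : ℕ}

/-- the exposing coefficient vector of a route -/
def cR (G : LGraph) (R : Route G) (e : Fin G.m) : ℝ :=
  if (e, true) ∈ R.steps then 1 else if (e, false) ∈ R.steps then -1
  else if G.etype e = .forward then -1 else 1

/-- the exposing linear functional of a route -/
noncomputable def fR (G : LGraph) (R : Route G) : (Fin G.m → ℝ) →ₗ[ℝ] ℝ where
  toFun w := ∑ e : Fin G.m, cR G R e * w e
  map_add' u v := by
    simp only [Pi.add_apply, mul_add, Finset.sum_add_distrib]
  map_smul' c u := by
    simp only [Pi.smul_apply, smul_eq_mul, RingHom.id_apply, Finset.mul_sum]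
    exact Finset.sum_congr rfl fun e _ => by ring

lemma cR_mul_vec_self (R : Route G) (e : Fin G.m) :
    cR G R e * R.vec e = if R.vec e = 0 then 0 else 1 := by
  rcases vec_cases R e with ⟨hm, hv⟩ | ⟨hm, hv⟩ | ⟨h1, h2, hv⟩
  · rw [hv, cR, if_pos hm]; norm_num
  · rw [hv, cR, if_neg (fun h => not_both_mem R e h hm), if_pos hm]; norm_num
  · rw [hv, cR, if_neg h1, if_neg h2]; norm_num

lemma term_le (hacyc : G.Acyclic) (R R' : Route G) (e : Fin G.m) :
    cR G R e * R'.vec e ≤ cR G R e * R.vec e ∧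
    (cR G R e * R'.vec e = cR G R e * R.vec e → R'.vec e = R.vec e) := by
  have hv' : R'.vec e = 1 ∧ (e, true) ∈ R'.steps ∨ R'.vec e = -1 ∧ (e, false) ∈ R'.steps ∨
      R'.vec e = 0 := by
    rcases vec_cases R' e with ⟨hm, hv⟩ | ⟨hm, hv⟩ | ⟨_, _, hv⟩
    · exact Or.inl ⟨hv, hm⟩
    · exact Or.inr (Or.inl ⟨hv, hm⟩)
    · exact Or.inr (Or.inr hv)
  rcases vec_cases R e with ⟨hm, hv⟩ | ⟨hm, hv⟩ | ⟨h1, h2, hv⟩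
  · rw [hv, cR, if_pos hm]
    rcases hv' with ⟨hw, _⟩ | ⟨hw, _⟩ | hw <;> rw [hw] <;> norm_num
  · rw [hv, cR, if_neg (fun h => not_both_mem R e h hm), if_pos hm]
    rcases hv' with ⟨hw, _⟩ | ⟨hw, _⟩ | hw <;> rw [hw] <;> norm_num
  · rw [hv, cR, if_neg h1, if_neg h2, mul_zero]
    rcases hv' with ⟨hw, hmem⟩ | ⟨hw, hmem⟩ | hw
    · have htype : G.etype e = .forward := by
        have hnb := (R'.dir _ hmem).1 rfl
        have hnbd := no_bidir hacyc e
        cases h : G.etype e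
        · rfl
        · exact absurd h hnb
        · exact absurd h hnbd
      rw [hw, if_pos htype]; norm_num
    · have htype : G.etype e ≠ .forward := (R'.dir _ hmem).2 rfl
      rw [hw, if_neg htype]; norm_num
    · rw [hw, mul_zero]; exact ⟨le_rfl, fun _ => rfl⟩

lemma fR_apply (R : Route G) (w : Fin G.m → ℝ) :
    fR G R w = ∑ e : Fin G.m, cR G R e * w e := rfl

lemma fR_le (hacyc : G.Acyclic) (R R' : Route G) :
    fR G R R'.vec ≤ fR G R R.vec ∧ (fR G R R'.vec = fR G R R.vec → R'.vec = R.vec) := by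
  rw [fR_apply, fR_apply]
  constructor
  · exact Finset.sum_le_sum fun e _ => (term_le hacyc R R' e).1
  · intro heq
    funext e
    have := (Finset.sum_eq_sum_iff_of_le (fun e (_ : e ∈ Finset.univ) =>
      (term_le hacyc R R' e).1)).mp heq e (Finset.mem_univ e)
    exact (term_le hacyc R R' e).2 this

/-- points of the hull attaining the exposed value equal the route vector -/
lemma hull_exposed (hacyc : G.Acyclic) (R : Route G) {y : Fin G.m → ℝ}
    (hy : y ∈ convexHull ℝ (SR G)) (hval : fR G R y = fR G R R.vec) : y = R.vec := by
  rw [convexHull_eq] at hy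
  obtain ⟨ι, t, w, p, hw0, hw1, hmem, hcm⟩ := hy
  rw [Finset.centerMass_eq_of_sum_1 _ _ hw1] at hcm
  set L : ℝ := fR G R R.vec with hL
  have hfp : ∀ i ∈ t, fR G R (p i) ≤ L := by
    intro i hi
    obtain ⟨R', hR'⟩ := hmem i hi
    rw [hR']
    exact (fR_le hacyc R R').1
  have hfy : fR G R y = ∑ i ∈ t, w i * fR G R (p i) := by
    rw [← hcm, map_sum]
    exact Finset.sum_congr rfl fun i _ => by rw [map_smul, smul_eq_mul]
  have hterm : ∀ i ∈ t, w i * fR G R (p i) ≤ w i * L := by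
    intro i hi
    exact mul_le_mul_of_nonneg_left (hfp i hi) (hw0 i hi)
  have hsumL : ∑ i ∈ t, w i * L = L := by
    rw [← Finset.sum_mul, hw1, one_mul]
  have heq : ∀ i ∈ t, w i * fR G R (p i) = w i * L := by
    refine (Finset.sum_eq_sum_iff_of_le hterm).mp ?_
    rw [hsumL, ← hfy, hval]
  have hpR : ∀ i ∈ t, w i • p i = w i • R.vec := by
    intro i hi
    rcases eq_or_lt_of_le (hw0 i hi) with h0 | h0
    · rw [← h0, zero_smul, zero_smul]
    · have hfpi : fR G R (p i) = L := by
        have := heq i hi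
        exact mul_left_cancel₀ (ne_of_gt h0) this
      obtain ⟨R', hR'⟩ := hmem i hi
      rw [hR'] at hfpi ⊢
      rw [(fR_le hacyc R R').2 hfpi]
  rw [← hcm]
  calc ∑ i ∈ t, w i • p i = ∑ i ∈ t, w i • R.vec := Finset.sum_congr rfl hpR
    _ = (∑ i ∈ t, w i) • R.vec := by rw [Finset.sum_smul]
    _ = R.vec := by rw [hw1, one_smul]

end Aux6
end FP

open FP FP.Aux FP.Aux2 FP.Aux3 FP.Aux4 FP.Aux5 FP.Aux6 in
/-- If `G` is acyclic, the set of extreme points of the polytope `F_G`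
is exactly the set of signed characteristic vectors of routes of `G`. -/
theorem stmt3 (n : ℕ) (hn : 2 ≤ n) (G : LGraph) (hsrc : G.src = 1) (hsnk : G.snk = n)
    (hwf : G.WF n) (hconn : G.Connected n) (hacyc : G.Acyclic)
    (hroutes : ∀ e : Fin G.m, ∃ (R : LGraph.Route G) (c : Bool), (e, c) ∈ R.steps)
    (hends : ∀ e : Fin G.m,
      (G.tail e = 1 ∨ G.head e = 1 ∨ G.tail e = n ∨ G.head e = n) → G.etype e = .forward) :
    Set.extremePoints ℝ G.flowSet = { x | ∃ R : LGraph.Route G, x = R.vec } := by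
  have hSR : SR G ⊆ G.flowSet := by
    rintro y ⟨R, rfl⟩
    exact vec_mem_flowSet hwf hn hsrc hsnk R
  have hhull : convexHull ℝ (SR G) ⊆ G.flowSet := convexHull_min hSR flowSet_convex
  ext x
  constructor
  · intro hx
    have hxhull : x ∈ convexHull ℝ (SR G) := decomp hacyc hwf hn hsrc hsnk x hx.1
    have hxext : x ∈ (convexHull ℝ (SR G)).extremePoints ℝ :=
      ⟨hxhull, fun y hy z hz hseg => hx.2 (hhull hy) (hhull hz) hseg⟩
    exact extremePoints_convexHull_subset hxext
  · rintro ⟨R, rfl⟩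
    refine ⟨vec_mem_flowSet hwf hn hsrc hsnk R, ?_⟩
    intro y hy z hz hseg
    obtain ⟨a, b, ha, hb, hab, hsum⟩ := hseg
    have hyh : y ∈ convexHull ℝ (SR G) := decomp hacyc hwf hn hsrc hsnk y hy
    have hzh : z ∈ convexHull ℝ (SR G) := decomp hacyc hwf hn hsrc hsnk z hz
    set L : ℝ := fR G R R.vec with hL
    have hhalf : convexHull ℝ (SR G) ⊆ {w : Fin G.m → ℝ | fR G R w ≤ L} := by
      refine convexHull_min ?_ (convex_halfSpace_le (fR G R).isLinear L)
      rintro p ⟨R', rfl⟩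
      exact (fR_le hacyc R R').1
    have hfy : fR G R y ≤ L := hhalf hyh
    have hfz : fR G R z ≤ L := hhalf hzh
    have hcombo : a * fR G R y + b * fR G R z = L := by
      have h := congrArg (fR G R) hsum
      rw [map_add, map_smul, map_smul] at h
      simpa [smul_eq_mul, hL] using h
    have haL : a * L + b * L = L := by rw [← add_mul, hab, one_mul]
    have hfyL : fR G R y = L := by
      have h1 : a * fR G R y = a * L := by nlinarith
      exact mul_left_cancel₀ (ne_of_gt ha) h1
    have hfzL : fR G R z = L := by
      have h1 : b * fR G R z = b * L := by nlinarith
      exact mul_left_cancel₀ (ne_of_gt hb) h1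
    exact hull_exposed hacyc R hyh hfyL
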